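/- Euler's arctangent series: for all real x, arctan(x) = Σ_{m≥0} (2^(2m) (m!)² / (2m+1)!) · x^(2m+1) / (1 + x²)^(m+1). -/

import Mathlib

open Real Filter Finset intervalIntegral Topology

noncomputable def eulerI (x : ℝ) (n : ℕ) : ℝ := ∫ t in (0:ℝ)..x, t^(2*n) / (1+t^2)^(n+1)

lemma euler_cont (n : ℕ) : Continuous (fun t : ℝ => t^(2*n)/(1+t^2)^(n+1)) := by
  apply Continuous.div (by continuity) (by continuity)
  intro t; positivity

lemma euler_key (x : ℝ) (m : ℕ) :
    x^(2*m+1)/(1+x^2)^(m+1)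
      = (2*m+1 : ℝ) * eulerI x m - (2*m+2 : ℝ) * eulerI x (m+1) := by
  have hderiv : ∀ t : ℝ, HasDerivAt (fun t : ℝ => t^(2*m+1)/(1+t^2)^(m+1))
      ((2*m+1 : ℝ) * (t^(2*m)/(1+t^2)^(m+1)) - (2*m+2 : ℝ) * (t^(2*(m+1))/(1+t^2)^(m+1+1))) t := by
    intro t
    have ht : (1+t^2 : ℝ) ≠ 0 := by positivity
    have h1 : HasDerivAt (fun t : ℝ => t^(2*m+1)) ((2*m+1 : ℝ) * t^(2*m)) t := by
      simpa using hasDerivAt_pow (2*m+1) t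
    have h2 : HasDerivAt (fun t : ℝ => (1+t^2)^(m+1))
        (((m+1 : ℕ) : ℝ) * (1+t^2)^m * (2*t^1)) t := by
      have hin : HasDerivAt (fun t : ℝ => 1 + t^2) (2*t^1) t := by
        simpa using (hasDerivAt_pow 2 t).const_add 1
      simpa using hin.fun_pow (m+1)
    have := h1.fun_div h2 (pow_ne_zero _ ht)
    refine this.congr_deriv ?_
    have h2t : (0:ℝ) < 1 + t^2 := by positivity
    field_simp
    push_cast
    ring
  have hint := intervalIntegral.integral_eq_sub_of_hasDerivAt
    (f := fun t : ℝ => t^(2*m+1)/(1+t^2)^(m+1)) (a := 0) (b := x)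
    (fun t _ => hderiv t)
    (by
      apply Continuous.intervalIntegrable
      exact ((continuous_const.mul (euler_cont m)).sub
        (continuous_const.mul (euler_cont (m+1)))))
  rw [intervalIntegral.integral_sub ((continuous_const.fun_mul (euler_cont m)).intervalIntegrable _ _)
      ((continuous_const.fun_mul (euler_cont (m+1))).intervalIntegrable _ _),
    intervalIntegral.integral_const_mul, intervalIntegral.integral_const_mul] at hint
  have h0 : (0:ℝ)^(2*m+1) = 0 := zero_pow (by omega)
  rw [h0, zero_div, sub_zero] at hint
  rw [eulerI, eulerI]
  linarith [hint]

noncomputable def eulerC (m : ℕ) : ℝ :=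
  2 ^ (2 * m) * ((Nat.factorial m : ℝ)) ^ 2 / (Nat.factorial (2 * m + 1) : ℝ)

noncomputable def eulerB (m : ℕ) : ℝ :=
  2 ^ (2 * m) * ((Nat.factorial m : ℝ)) ^ 2 / (Nat.factorial (2 * m) : ℝ)

lemma fact_pos' (n : ℕ) : (0:ℝ) < (Nat.factorial n : ℝ) := by
  exact_mod_cast Nat.factorial_pos n

lemma eulerC_rel1 (m : ℕ) : eulerC m * (2*m+1 : ℝ) = eulerB m := by
  have h : (Nat.factorial (2*m+1) : ℝ) = (2*m+1 : ℝ) * (Nat.factorial (2*m) : ℝ) := by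
    rw [Nat.factorial_succ]; push_cast; ring
  rw [eulerC, eulerB, h]
  have h1 := (fact_pos' (2*m)).ne'
  have h2 : (2*(m:ℝ)+1) ≠ 0 := by positivity
  field_simp

lemma eulerC_rel2 (m : ℕ) : eulerC m * (2*m+2 : ℝ) = eulerB (m+1) := by
  have h : (Nat.factorial (2*(m+1)) : ℝ)
      = (2*m+2 : ℝ) * ((2*m+1 : ℝ) * (Nat.factorial (2*m) : ℝ)) := by
    have : 2*(m+1) = (2*m+1) + 1 := by ring
    rw [this, Nat.factorial_succ, Nat.factorial_succ]; push_cast; ring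
  have hfs : (Nat.factorial (m+1) : ℝ) = ((m:ℝ)+1) * (Nat.factorial m : ℝ) := by
    rw [Nat.factorial_succ]; push_cast; ring
  have h' : (Nat.factorial (2*m+1) : ℝ) = (2*m+1 : ℝ) * (Nat.factorial (2*m) : ℝ) := by
    rw [Nat.factorial_succ]; push_cast; ring
  rw [eulerC, eulerB, h, hfs, h']
  have h1 := (fact_pos' (2*m)).ne'
  have h2 : (2*(m:ℝ)+1) ≠ 0 := by positivity
  have h3 : (2*(m:ℝ)+2) ≠ 0 := by positivity
  field_simp
  ring

lemma euler_partial (x : ℝ) (n : ℕ) :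
    ∑ m ∈ Finset.range n, eulerC m * x^(2*m+1) / (1+x^2)^(m+1)
      = Real.arctan x - eulerB n * eulerI x n := by
  induction n with
  | zero =>
    have hI : eulerI x 0 = Real.arctan x := by
      rw [eulerI]
      rw [show (fun t : ℝ => t^(2*0)/(1+t^2)^(0+1)) = (fun t : ℝ => 1/(1+t^2)) from by
        funext t; norm_num]
      rw [integral_one_div_one_add_sq, Real.arctan_zero, sub_zero]
    simp [hI, eulerB, Nat.factorial]
  | succ n ih =>
    rw [Finset.sum_range_succ, ih]
    have hkey := euler_key x n
    have h1 := eulerC_rel1 n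
    have h2 := eulerC_rel2 n
    have : eulerC n * x^(2*n+1) / (1+x^2)^(n+1)
        = eulerB n * eulerI x n - eulerB (n+1) * eulerI x (n+1) := by
      rw [mul_div_assoc, hkey, ← h1, ← h2]; ring
    rw [this]; ring

lemma euler_I_bound (x : ℝ) (n : ℕ) :
    |eulerI x n| ≤ (x^2/(1+x^2))^n * |x| := by
  have h := intervalIntegral.norm_integral_le_of_norm_le_const
    (a := (0:ℝ)) (b := x) (C := (x^2/(1+x^2))^n)
    (f := fun t : ℝ => t^(2*n)/(1+t^2)^(n+1)) ?_
  · simpa [Real.norm_eq_abs, eulerI] using h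
  · intro t ht
    have ht2 : t^2 ≤ x^2 := by
      rcases Set.mem_uIoc.mp ht with ⟨h1, h2⟩ | ⟨h1, h2⟩ <;> nlinarith
    have hq : t^2/(1+t^2) ≤ x^2/(1+x^2) := by
      rw [div_le_div_iff₀ (by positivity) (by positivity)]; nlinarith
    have hnn : (0:ℝ) ≤ t^(2*n)/(1+t^2)^(n+1) := by
      have : t^(2*n) = (t^2)^n := by rw [← pow_mul]
      rw [this]; positivity
    rw [Real.norm_eq_abs, abs_of_nonneg hnn]
    calc t^(2*n)/(1+t^2)^(n+1) = ((t^2/(1+t^2))^n)/(1+t^2) := by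
          rw [div_pow, ← pow_mul, div_div, ← pow_succ]
      _ ≤ (t^2/(1+t^2))^n := div_le_self (by positivity) (by nlinarith)
      _ ≤ (x^2/(1+x^2))^n := by
          apply pow_le_pow_left₀ (by positivity) hq

lemma euler_nat_ineq (n : ℕ) :
    4^n * (Nat.factorial n * Nat.factorial n) ≤ (2*n+1) * Nat.factorial (2*n) := by
  calc 4^n * (Nat.factorial n * Nat.factorial n)
      ≤ ((2*n+1) * Nat.choose (2*n) n) * (Nat.factorial n * Nat.factorial n) :=
        Nat.mul_le_mul_right _ (Nat.four_pow_le_two_mul_add_one_mul_central_binom n)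
    _ = (2*n+1) * Nat.factorial (2*n) := by
        have h := Nat.choose_mul_factorial_mul_factorial (show n ≤ 2*n by omega)
        have h2 : 2*n - n = n := by omega
        rw [h2] at h
        rw [mul_assoc, ← mul_assoc (Nat.choose (2*n) n), h]

lemma eulerB_le (n : ℕ) : eulerB n ≤ 2*n+1 := by
  rw [eulerB, div_le_iff₀ (fact_pos' (2*n))]
  have := euler_nat_ineq n
  have hcast : ((4:ℕ):ℝ)^n * ((Nat.factorial n : ℝ) * (Nat.factorial n : ℝ))
      ≤ ((2*n+1 : ℕ) : ℝ) * (Nat.factorial (2*n) : ℝ) := by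
    push_cast
    exact_mod_cast this
  calc (2:ℝ)^(2*n) * (Nat.factorial n : ℝ)^2
      = ((4:ℕ):ℝ)^n * ((Nat.factorial n : ℝ) * (Nat.factorial n : ℝ)) := by
        push_cast; rw [pow_mul]; ring
    _ ≤ ((2*n+1 : ℕ) : ℝ) * (Nat.factorial (2*n) : ℝ) := hcast
    _ = (2*n+1 : ℝ) * (Nat.factorial (2*n) : ℝ) := by push_cast; ring

lemma eulerB_nonneg (n : ℕ) : 0 ≤ eulerB n := by
  rw [eulerB]; positivity

lemma eulerC_le_one (n : ℕ) : eulerC n ≤ 1 := by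
  rw [eulerC, div_le_one (fact_pos' (2*n+1))]
  have h := euler_nat_ineq n
  have h' : (Nat.factorial (2*n+1)) = (2*n+1) * Nat.factorial (2*n) := Nat.factorial_succ _
  calc (2:ℝ)^(2*n) * (Nat.factorial n : ℝ)^2
      = ((4^n * (Nat.factorial n * Nat.factorial n) : ℕ) : ℝ) := by
        push_cast; rw [pow_mul]; ring
    _ ≤ (((2*n+1) * Nat.factorial (2*n) : ℕ) : ℝ) := by exact_mod_cast h
    _ = (Nat.factorial (2*n+1) : ℝ) := by rw [← h']

theorem euler_arctan_series (x : ℝ) :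
    HasSum (fun m : ℕ =>
      (2 ^ (2 * m) * ((Nat.factorial m : ℝ)) ^ 2 / (Nat.factorial (2 * m + 1) : ℝ)) *
        x ^ (2 * m + 1) / (1 + x ^ 2) ^ (m + 1))
      (Real.arctan x) := by
  have hx2 : (0:ℝ) < 1 + x^2 := by positivity
  set q : ℝ := x^2/(1+x^2) with hqdef
  have hq0 : 0 ≤ q := by positivity
  have hq1 : q < 1 := by rw [hqdef, div_lt_one hx2]; nlinarith
  have hbound : ∀ m : ℕ, ‖eulerC m * x^(2*m+1) / (1+x^2)^(m+1)‖ ≤ |x| * q^m := by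
    intro m
    have hC0 : 0 ≤ eulerC m := by rw [eulerC]; positivity
    have hC1 := eulerC_le_one m
    rw [Real.norm_eq_abs, abs_div, abs_mul, abs_of_nonneg hC0, abs_pow, abs_pow,
      abs_of_pos hx2]
    have hxp : |x|^(2*m+1) = (x^2)^m * |x| := by
      rw [pow_succ, pow_mul, sq_abs]
    rw [hxp]
    calc eulerC m * ((x^2)^m*|x|)/(1+x^2)^(m+1)
        ≤ 1 * ((x^2)^m*|x|)/(1+x^2)^(m+1) := by gcongr
      _ = (x^2)^m*|x|/((1+x^2)^m*(1+x^2)) := by rw [one_mul, pow_succ (1+x^2) m]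
      _ ≤ (x^2)^m*|x|/((1+x^2)^m*1) := by
          gcongr
          nlinarith
      _ = |x| * q^m := by rw [mul_one, hqdef, div_pow]; ring
  have hsummable : Summable (fun m : ℕ =>
      ‖eulerC m * x^(2*m+1) / (1+x^2)^(m+1)‖) := by
    apply Summable.of_nonneg_of_le (fun m => norm_nonneg _) hbound
    exact (summable_geometric_of_lt_one hq0 hq1).mul_left |x|
  have h0 : Tendsto (fun n => eulerB n * eulerI x n) atTop (𝓝 0) := by
    apply squeeze_zero_norm (a := fun n : ℕ => (2*(n:ℝ)+1) * (q^n * |x|))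
    · intro n
      rw [Real.norm_eq_abs, abs_mul, abs_of_nonneg (eulerB_nonneg n)]
      have hIb : |eulerI x n| ≤ q^n * |x| := euler_I_bound x n
      exact mul_le_mul (eulerB_le n) hIb (abs_nonneg _) (by positivity)
    · have t1 : Tendsto (fun n : ℕ => (n:ℝ) * q^n) atTop (𝓝 0) := by
        have hs := summable_pow_mul_geometric_of_norm_lt_one (R := ℝ) 1
          (r := q) (by rw [Real.norm_eq_abs, abs_of_nonneg hq0]; exact hq1)
        simpa using hs.tendsto_atTop_zero
      have t2 : Tendsto (fun n : ℕ => q^n) atTop (𝓝 0) :=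
        tendsto_pow_atTop_nhds_zero_of_lt_one hq0 hq1
      have htot := ((t1.const_mul 2).add t2).mul_const |x|
      have heq : (fun n : ℕ => (2*((n:ℝ)*q^n) + q^n) * |x|)
          = fun n : ℕ => (2*(n:ℝ)+1) * (q^n * |x|) := by
        funext n; ring
      rw [heq] at htot
      simpa using htot
  have htendsto : Tendsto (fun n => ∑ m ∈ Finset.range n,
      eulerC m * x^(2*m+1) / (1+x^2)^(m+1)) atTop (𝓝 (Real.arctan x)) := by
    have heq : (fun n => ∑ m ∈ Finset.range n, eulerC m * x^(2*m+1) / (1+x^2)^(m+1))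
        = fun n => Real.arctan x - eulerB n * eulerI x n := funext (euler_partial x)
    rw [heq]
    simpa using tendsto_const_nhds.sub h0
  exact (hasSum_iff_tendsto_nat_of_summable_norm hsummable).mpr htendsto
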